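/- Let Σ ⊆ ℝ^d be Lebesgue measurable with finite measure and n ≥ 1. Let A : Σ × ℝ^n → ℝ^n be Carathéodory, monotone in its second variable (⟨A(x,ξ) − A(x,η), ξ − η⟩ ≥ 0 for a.e. x ∈ Σ and all ξ, η ∈ ℝ^n), and locally uniformly bounded: for every R > 0 there exists K > 0 such that |A(x,ξ)| ≤ K for a.e. x ∈ Σ and every ξ with |ξ| ≤ R. Let W, A⁰ ∈ L¹(Σ; ℝ^n) be such that x ↦ ⟨A⁰(x), W(x)⟩ is integrable, and suppose that ∫_Σ ⟨A⁰(x) − A(x, V(x)), W(x) − V(x)⟩ dx ≥ 0 for every essentially bounded measurable V : Σ → ℝ^n. Then A⁰(x) = A(x, W(x)) for a.e. x ∈ Σ. -/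

import Mathlib

open MeasureTheory Set Filter Topology

/-- A Carathéodory-type composition with a simple function is measurable. -/
lemma minty_aux_simple {d n : ℕ}
    (A : (Fin d → ℝ) → EuclideanSpace ℝ (Fin n) → EuclideanSpace ℝ (Fin n))
    (hAmeas : ∀ ξ, Measurable fun x => A x ξ)
    (s : SimpleFunc (Fin d → ℝ) (EuclideanSpace ℝ (Fin n))) :
    Measurable fun x => A x (s x) := by
  have hrepr : (fun x => A x (s x))
      = fun x => ∑ c ∈ s.range, (⇑s ⁻¹' {c}).indicator (fun y => A y c) x := by
    funext x
    rw [Finset.sum_eq_single (s x)]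
    · simp [Set.indicator_of_mem, Set.mem_preimage]
    · intro b _ hb
      rw [Set.indicator_of_notMem]
      simp only [Set.mem_preimage, Set.mem_singleton_iff]
      exact fun h => hb h.symm
    · intro h; exact absurd (SimpleFunc.mem_range_self s x) h
  rw [hrepr]
  exact Finset.measurable_sum _ fun c _ =>
    (hAmeas c).indicator (s.measurableSet_preimage {c})

/-- Carathéodory composition with a measurable function is a.e.-measurable. -/
lemma minty_aux_comp {d n : ℕ} {μ : Measure (Fin d → ℝ)}
    (A : (Fin d → ℝ) → EuclideanSpace ℝ (Fin n) → EuclideanSpace ℝ (Fin n))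
    (hAmeas : ∀ ξ, Measurable fun x => A x ξ)
    (hAcont : ∀ᵐ x ∂μ, Continuous (A x))
    (U : (Fin d → ℝ) → EuclideanSpace ℝ (Fin n)) (hU : Measurable U) :
    AEMeasurable (fun x => A x (U x)) μ := by
  have hU' : StronglyMeasurable U := hU.stronglyMeasurable
  refine aemeasurable_of_tendsto_metrizable_ae Filter.atTop
    (fun k => (minty_aux_simple A hAmeas (hU'.approx k)).aemeasurable) ?_
  filter_upwards [hAcont] with x hx
  exact (hx.tendsto (U x)).comp (hU'.tendsto_approx x)

set_option maxHeartbeats 2000000 in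
/-- **Truncation-based Minty-type identification lemma** (the core of Step 4 of the proof
of the paper's Theorem 1.2 and of the limit identifications in Lemmas 3.1 and 3.2).
Let `A : Σ × ℝ^n → ℝ^n` be Carathéodory, monotone in its second variable, and locally
uniformly bounded. If `W, A⁰ ∈ L¹(Σ; ℝ^n)` with `⟨A⁰, W⟩` integrable satisfy
`∫_Σ ⟨A⁰ − A(x, V), W − V⟩ dx ≥ 0` for every essentially bounded measurable `V`, then
`A⁰(x) = A(x, W(x))` a.e. on `Σ`. -/
theorem minty_identification
    (d n : ℕ) (hn : 1 ≤ n)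
    (Sig : Set (Fin d → ℝ)) (hSm : MeasurableSet Sig) (hSfin : volume Sig < ⊤)
    (A : (Fin d → ℝ) → EuclideanSpace ℝ (Fin n) → EuclideanSpace ℝ (Fin n))
    (hAmeas : ∀ ξ, Measurable fun x => A x ξ)
    (hAcont : ∀ᵐ x ∂(volume.restrict Sig), Continuous (A x))
    (hAmono : ∀ᵐ x ∂(volume.restrict Sig),
      ∀ ξ η, 0 ≤ (inner ℝ (A x ξ - A x η) (ξ - η) : ℝ))
    (hAbdd : ∀ R : ℝ, 0 < R → ∃ K : ℝ,
      ∀ᵐ x ∂(volume.restrict Sig), ∀ ξ, ‖ξ‖ ≤ R → ‖A x ξ‖ ≤ K)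
    (W A0 : (Fin d → ℝ) → EuclideanSpace ℝ (Fin n))
    (hWInt : Integrable W (volume.restrict Sig))
    (hA0Int : Integrable A0 (volume.restrict Sig))
    (hpairInt : Integrable (fun x => (inner ℝ (A0 x) (W x) : ℝ)) (volume.restrict Sig))
    (hminty : ∀ V : (Fin d → ℝ) → EuclideanSpace ℝ (Fin n), Measurable V →
      (∃ C, ∀ᵐ x ∂(volume.restrict Sig), ‖V x‖ ≤ C) →
      0 ≤ ∫ x, (inner ℝ (A0 x - A x (V x)) (W x - V x) : ℝ) ∂(volume.restrict Sig)) :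
    ∀ᵐ x ∂(volume.restrict Sig), A0 x = A x (W x) := by
  set μ := volume.restrict Sig with hμdef
  haveI : IsFiniteMeasure μ := ⟨by
    rw [hμdef, Measure.restrict_apply_univ]; exact hSfin⟩
  -- measurable representatives
  obtain ⟨W', hW'sm, hWW'⟩ := hWInt.1
  have hWm : Measurable W' := hW'sm.measurable
  obtain ⟨A0', hA0'sm, hA0A0'⟩ := hA0Int.1
  have hA0'm : Measurable A0' := hA0'sm.measurable
  have hW'Int : Integrable W' μ := hWInt.congr hWW'
  -- measurable representative of x ↦ A x (W' x)
  have hgA : AEMeasurable (fun x => A x (W' x)) μ :=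
    minty_aux_comp A hAmeas hAcont W' hWm
  obtain ⟨g, hgm, hgae⟩ := hgA
  -- the test direction
  set D : (Fin d → ℝ) → EuclideanSpace ℝ (Fin n) := fun x => A0' x - g x with hDdef
  have hDm : Measurable D := hA0'm.sub hgm
  set Z : (Fin d → ℝ) → EuclideanSpace ℝ (Fin n) :=
    fun x => (1 + ‖D x‖)⁻¹ • D x with hZdef
  have hZm : Measurable Z := ((measurable_const.add hDm.norm).inv).smul hDm
  have hZle : ∀ x, ‖Z x‖ ≤ 1 := by
    intro x
    have h1 : (0:ℝ) < 1 + ‖D x‖ := by positivity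
    have : ‖Z x‖ = (1 + ‖D x‖)⁻¹ * ‖D x‖ := by
      rw [hZdef]
      rw [norm_smul, Real.norm_eq_abs, abs_of_nonneg (le_of_lt (inv_pos.2 h1))]
    rw [this]
    calc (1 + ‖D x‖)⁻¹ * ‖D x‖ ≤ (1 + ‖D x‖)⁻¹ * (1 + ‖D x‖) := by
          gcongr; linarith
      _ = 1 := inv_mul_cancel₀ h1.ne'
  have hZnn : ∀ x, 0 ≤ (inner ℝ (D x) (Z x) : ℝ) := by
    intro x
    rw [hZdef]
    rw [real_inner_smul_right, real_inner_self_eq_norm_sq]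
    positivity
  -- truncation sets
  set E : ℕ → Set (Fin d → ℝ) := fun l => {x | ‖W' x‖ ≤ (l : ℝ)} with hEdef
  have hEm : ∀ l, MeasurableSet (E l) := fun l =>
    measurableSet_le hWm.norm measurable_const
  have hEmono : Monotone E := by
    intro a b hab x hx
    simp only [hEdef, Set.mem_setOf_eq] at hx ⊢
    exact le_trans hx (Nat.cast_le.2 hab)
  have hEunion : ⋃ l, E l = univ := by
    rw [eq_univ_iff_forall]
    intro x
    obtain ⟨l, hl⟩ := exists_nat_ge ‖W' x‖
    exact Set.mem_iUnion.2 ⟨l, hl⟩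
  -- the "tail" function
  set q : (Fin d → ℝ) → ℝ := fun x => (inner ℝ (A0 x - A x 0) (W' x) : ℝ) with hqdef
  have qInt : Integrable q μ := by
    obtain ⟨K0, hK0⟩ := hAbdd 1 one_pos
    have h1 : Integrable (fun x => (inner ℝ (A0 x) (W' x) : ℝ)) μ := by
      apply hpairInt.congr
      filter_upwards [hWW'] with x hx
      rw [hx]
    have h2 : Integrable (fun x => (inner ℝ (A x 0) (W' x) : ℝ)) μ := by
      apply Integrable.mono' (hW'Int.norm.const_mul K0)
        (((hAmeas 0).inner hWm).aestronglyMeasurable)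
      filter_upwards [hK0] with x hx
      calc ‖(inner ℝ (A x 0) (W' x) : ℝ)‖ ≤ ‖A x 0‖ * ‖W' x‖ := norm_inner_le_norm _ _
        _ ≤ K0 * ‖W' x‖ := by
            apply mul_le_mul_of_nonneg_right _ (norm_nonneg _)
            exact hx 0 (by simp)
    apply (h1.sub h2).congr
    filter_upwards with x
    rw [hqdef]
    simp [inner_sub_left]
  -- Step 1: the key inequality from testing with truncations
  have step1 : ∀ (l m : ℕ), l ≤ m → ∀ h : ℝ, 0 < h →
      h * ∫ x in E l, (inner ℝ (A0 x - A x (W' x + h • Z x)) (Z x) : ℝ) ∂μ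
        ≤ ∫ x in (E m)ᶜ, q x ∂μ := by
    intro l m hlm h hh
    set V : (Fin d → ℝ) → EuclideanSpace ℝ (Fin n) :=
      fun x => (E m).indicator W' x + (E l).indicator (fun y => h • Z y) x with hVdef
    have hVm : Measurable V :=
      (hWm.indicator (hEm m)).add ((hZm.const_smul h).indicator (hEm l))
    have hVbd : ∃ C, ∀ᵐ x ∂μ, ‖V x‖ ≤ C := by
      refine ⟨(m : ℝ) + h, ae_of_all _ fun x => ?_⟩
      have h1 : ‖(E m).indicator W' x‖ ≤ (m : ℝ) := by
        by_cases hx : x ∈ E m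
        · rw [Set.indicator_of_mem hx]; exact hx
        · rw [Set.indicator_of_notMem hx]; simp
      have h2 : ‖(E l).indicator (fun y => h • Z y) x‖ ≤ h := by
        by_cases hx : x ∈ E l
        · rw [Set.indicator_of_mem hx, norm_smul, Real.norm_eq_abs, abs_of_pos hh]
          calc h * ‖Z x‖ ≤ h * 1 := by gcongr; exact hZle x
            _ = h := mul_one h
        · rw [Set.indicator_of_notMem hx]; simp [hh.le]
      calc ‖V x‖ ≤ ‖(E m).indicator W' x‖ + ‖(E l).indicator (fun y => h • Z y) x‖ :=
            norm_add_le _ _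
        _ ≤ (m : ℝ) + h := add_le_add h1 h2
    have hkey := hminty V hVm hVbd
    set p1 : (Fin d → ℝ) → ℝ :=
      fun y => (inner ℝ (A0 y - A y (W' y + h • Z y)) ((-h) • Z y) : ℝ) with hp1def
    have hdecomp : (fun x => (inner ℝ (A0 x - A x (V x)) (W x - V x) : ℝ))
        =ᵐ[μ] fun x => (E l).indicator p1 x + ((E m)ᶜ).indicator q x := by
      filter_upwards [hWW'] with x hx
      by_cases hxl : x ∈ E l
      · have hxm : x ∈ E m := hEmono hlm hxl
        have hxmc : x ∉ (E m)ᶜ := by simpa using hxm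
        rw [Set.indicator_of_mem hxl, Set.indicator_of_notMem hxmc, add_zero, hp1def]
        have hVx : V x = W' x + h • Z x := by
          rw [hVdef]; simp only
          rw [Set.indicator_of_mem hxm, Set.indicator_of_mem hxl]
        rw [hVx, hx]
        congr 1
        rw [sub_add_cancel_left, neg_smul]
      · by_cases hxm : x ∈ E m
        · have hxmc : x ∉ (E m)ᶜ := by simpa using hxm
          rw [Set.indicator_of_notMem hxl, Set.indicator_of_notMem hxmc, add_zero]
          have hVx : V x = W' x := by
            rw [hVdef]; simp only
            rw [Set.indicator_of_mem hxm, Set.indicator_of_notMem hxl, add_zero]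
          rw [hVx, hx, sub_self, inner_zero_right]
        · have hxmc : x ∈ (E m)ᶜ := by simpa using hxm
          rw [Set.indicator_of_notMem hxl, Set.indicator_of_mem hxmc, zero_add]
          have hVx : V x = 0 := by
            rw [hVdef]; simp only
            rw [Set.indicator_of_notMem hxm, Set.indicator_of_notMem hxl, add_zero]
          rw [hVx, hqdef, hx, sub_zero]
      -- done
    obtain ⟨K, hK⟩ := hAbdd ((l : ℝ) + h) (by positivity)
    have hp1sm : AEStronglyMeasurable p1 μ := by
      have hU : Measurable (fun x => W' x + h • Z x) := hWm.add (hZm.const_smul h)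
      have h1 : AEMeasurable (fun x => A x (W' x + h • Z x)) μ :=
        minty_aux_comp A hAmeas hAcont _ hU
      exact ((hA0Int.1.aemeasurable.sub h1).inner
        ((hZm.const_smul (-h)).aemeasurable)).aestronglyMeasurable
    have hI1 : Integrable ((E l).indicator p1) μ := by
      apply Integrable.mono'
        (g := fun x => h * (‖A0 x‖ + max K 0))
        ((hA0Int.norm.add (integrable_const (max K 0))).const_mul h)
        (hp1sm.indicator (hEm l))
      filter_upwards [hK] with x hx
      by_cases hxl : x ∈ E l
      · rw [Set.indicator_of_mem hxl]
        have hb : ‖W' x + h • Z x‖ ≤ (l : ℝ) + h := by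
          calc ‖W' x + h • Z x‖ ≤ ‖W' x‖ + ‖h • Z x‖ := norm_add_le _ _
            _ ≤ (l : ℝ) + h := by
                apply add_le_add hxl
                rw [norm_smul, Real.norm_eq_abs, abs_of_pos hh]
                calc h * ‖Z x‖ ≤ h * 1 := by gcongr; exact hZle x
                  _ = h := mul_one h
        have hAb : ‖A x (W' x + h • Z x)‖ ≤ max K 0 :=
          le_trans (hx _ hb) (le_max_left _ _)
        calc ‖p1 x‖ ≤ ‖A0 x - A x (W' x + h • Z x)‖ * ‖(-h) • Z x‖ :=
              norm_inner_le_norm _ _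
          _ ≤ (‖A0 x‖ + max K 0) * h := by
              apply mul_le_mul
              · exact le_trans (norm_sub_le _ _) (add_le_add le_rfl hAb)
              · rw [norm_smul, Real.norm_eq_abs, abs_neg, abs_of_pos hh]
                calc h * ‖Z x‖ ≤ h * 1 := by gcongr; exact hZle x
                  _ = h := mul_one h
              · exact norm_nonneg _
              · positivity
          _ = h * (‖A0 x‖ + max K 0) := mul_comm _ _
      · rw [Set.indicator_of_notMem hxl]
        simp only [norm_zero]
        positivity
    have hI2 : Integrable (((E m)ᶜ).indicator q) μ := qInt.indicator (hEm m).compl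
    rw [integral_congr_ae hdecomp, integral_add hI1 hI2,
      integral_indicator (hEm l), integral_indicator (hEm m).compl] at hkey
    have hpull : ∫ x in E l, p1 x ∂μ
        = (-h) * ∫ x in E l, (inner ℝ (A0 x - A x (W' x + h • Z x)) (Z x) : ℝ) ∂μ := by
      rw [← integral_const_mul]
      apply integral_congr_ae
      filter_upwards with x
      rw [hp1def]
      exact real_inner_smul_right _ _ _
    rw [hpull] at hkey
    linarith
  -- Step 2: the tail integral tends to 0
  have step2 : Tendsto (fun m : ℕ => ∫ x in (E m)ᶜ, q x ∂μ) atTop (𝓝 0) := by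
    have h1 : Tendsto (fun m : ℕ => ∫ x in E m, q x ∂μ) atTop (𝓝 (∫ x, q x ∂μ)) := by
      have := tendsto_setIntegral_of_monotone hEm hEmono
        (by rw [hEunion]; exact qInt.integrableOn)
      rw [hEunion] at this
      simpa [Measure.restrict_univ] using this
    have h2 : ∀ m : ℕ, ∫ x in (E m)ᶜ, q x ∂μ = ∫ x, q x ∂μ - ∫ x in E m, q x ∂μ := by
      intro m
      rw [← integral_add_compl (hEm m) qInt]
      ring
    simp only [h2]
    have h3 : Tendsto (fun m : ℕ => ∫ x, q x ∂μ - ∫ x in E m, q x ∂μ) atTop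
        (𝓝 (∫ x, q x ∂μ - ∫ x, q x ∂μ)) := tendsto_const_nhds.sub h1
    rw [sub_self] at h3
    exact h3
  -- Step 3: pass m → ∞
  have step3 : ∀ (l : ℕ) (h : ℝ), 0 < h →
      ∫ x in E l, (inner ℝ (A0 x - A x (W' x + h • Z x)) (Z x) : ℝ) ∂μ ≤ 0 := by
    intro l h hh
    have hc : h * ∫ x in E l, (inner ℝ (A0 x - A x (W' x + h • Z x)) (Z x) : ℝ) ∂μ ≤ 0 := by
      apply ge_of_tendsto step2
      filter_upwards [eventually_ge_atTop l] with m hm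
      exact step1 l m hm h hh
    nlinarith [hc, mul_pos hh (hh.trans_le le_rfl)]
  -- Step 4: pass h → 0 by dominated convergence
  have step4 : ∀ l : ℕ,
      ∫ x in E l, (inner ℝ (A0 x - A x (W' x)) (Z x) : ℝ) ∂μ ≤ 0 := by
    intro l
    obtain ⟨K, hK⟩ := hAbdd ((l : ℝ) + 1) (by positivity)
    set F : ℕ → (Fin d → ℝ) → ℝ :=
      fun k x => (inner ℝ (A0 x - A x (W' x + ((k : ℝ) + 1)⁻¹ • Z x)) (Z x) : ℝ) with hFdef
    have hhk : ∀ k : ℕ, (0:ℝ) < ((k : ℝ) + 1)⁻¹ := fun k => by positivity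
    have hhk1 : ∀ k : ℕ, ((k : ℝ) + 1)⁻¹ ≤ 1 := fun k => by
      rw [inv_le_one_iff₀]
      right
      simp
    have hFm : ∀ k, AEStronglyMeasurable (F k) (μ.restrict (E l)) := by
      intro k
      have hU : Measurable (fun x => W' x + ((k : ℝ) + 1)⁻¹ • Z x) :=
        hWm.add (hZm.const_smul ((k : ℝ) + 1)⁻¹)
      have h1 : AEMeasurable (fun x => A x (W' x + ((k : ℝ) + 1)⁻¹ • Z x)) μ :=
        minty_aux_comp A hAmeas hAcont _ hU
      exact (((hA0Int.1.aemeasurable.sub h1).inner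
        hZm.aemeasurable).aestronglyMeasurable).restrict
    have hbound : ∀ k, ∀ᵐ x ∂(μ.restrict (E l)), ‖F k x‖ ≤ ‖A0 x‖ + max K 0 := by
      intro k
      filter_upwards [ae_restrict_of_ae hK, ae_restrict_mem (hEm l)] with x hx hxl
      have hb : ‖W' x + ((k : ℝ) + 1)⁻¹ • Z x‖ ≤ (l : ℝ) + 1 := by
        calc ‖W' x + ((k : ℝ) + 1)⁻¹ • Z x‖
            ≤ ‖W' x‖ + ‖((k : ℝ) + 1)⁻¹ • Z x‖ := norm_add_le _ _
          _ ≤ (l : ℝ) + 1 := by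
              apply add_le_add hxl
              rw [norm_smul, Real.norm_eq_abs, abs_of_pos (hhk k)]
              calc ((k : ℝ) + 1)⁻¹ * ‖Z x‖ ≤ 1 * 1 :=
                    mul_le_mul (hhk1 k) (hZle x) (norm_nonneg _) zero_le_one
                _ = 1 := mul_one 1
      have hAb : ‖A x (W' x + ((k : ℝ) + 1)⁻¹ • Z x)‖ ≤ max K 0 :=
        le_trans (hx _ hb) (le_max_left _ _)
      calc ‖F k x‖ ≤ ‖A0 x - A x (W' x + ((k : ℝ) + 1)⁻¹ • Z x)‖ * ‖Z x‖ :=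
            norm_inner_le_norm _ _
        _ ≤ (‖A0 x‖ + max K 0) * 1 := by
            apply mul_le_mul _ (hZle x) (norm_nonneg _) (by positivity)
            exact le_trans (norm_sub_le _ _) (add_le_add le_rfl hAb)
        _ = ‖A0 x‖ + max K 0 := mul_one _
    have hconv : ∀ᵐ x ∂(μ.restrict (E l)), Tendsto (fun k => F k x) atTop
        (𝓝 ((inner ℝ (A0 x - A x (W' x)) (Z x) : ℝ))) := by
      filter_upwards [ae_restrict_of_ae hAcont] with x hx
      have h0 : Tendsto (fun k : ℕ => ((k : ℝ) + 1)⁻¹) atTop (𝓝 0) := by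
        simpa [one_div] using (tendsto_one_div_add_atTop_nhds_zero_nat :
          Tendsto (fun n : ℕ => 1 / ((n : ℝ) + 1)) atTop (𝓝 0))
      have h1' : Tendsto (fun k : ℕ => ((k : ℝ) + 1)⁻¹ • Z x) atTop (𝓝 ((0:ℝ) • Z x)) :=
        h0.smul_const (Z x)
      rw [zero_smul] at h1'
      have h1 : Tendsto (fun k : ℕ => W' x + ((k : ℝ) + 1)⁻¹ • Z x) atTop (𝓝 (W' x + 0)) :=
        tendsto_const_nhds.add h1'
      rw [add_zero] at h1
      have h2 : Tendsto (fun k : ℕ => A x (W' x + ((k : ℝ) + 1)⁻¹ • Z x)) atTop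
          (𝓝 (A x (W' x))) := (hx.tendsto (W' x)).comp h1
      exact (tendsto_const_nhds.sub h2).inner tendsto_const_nhds
    have htend := tendsto_integral_of_dominated_convergence
      (fun x => ‖A0 x‖ + max K 0) hFm
      ((hA0Int.norm.add (integrable_const (max K 0))).restrict)
      hbound hconv
    apply le_of_tendsto htend
    filter_upwards with k
    exact step3 l _ (hhk k)
  -- Step 5: D = 0 a.e. on each E l
  have step5 : ∀ l : ℕ, ∀ᵐ x ∂(μ.restrict (E l)), D x = 0 := by
    intro l
    obtain ⟨K, hK⟩ := hAbdd ((l : ℝ) + 1) (by positivity)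
    have hcongr : (fun x => (inner ℝ (A0 x - A x (W' x)) (Z x) : ℝ))
        =ᵐ[μ] fun x => (inner ℝ (D x) (Z x) : ℝ) := by
      filter_upwards [hA0A0', hgae] with x h1 h2
      rw [hDdef]
      simp only
      rw [h1, h2]
    have hle : ∫ x in E l, (inner ℝ (D x) (Z x) : ℝ) ∂μ ≤ 0 := by
      rw [← integral_congr_ae (ae_restrict_of_ae hcongr)]
      exact step4 l
    have hInt : Integrable (fun x => (inner ℝ (D x) (Z x) : ℝ)) (μ.restrict (E l)) := by
      apply Integrable.mono'
        (g := fun x => ‖A0' x‖ + max K 0)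
        (((hA0Int.congr hA0A0').norm.add (integrable_const (max K 0))).restrict)
        ((hDm.inner hZm).aestronglyMeasurable.restrict)
      filter_upwards [ae_restrict_of_ae hK, ae_restrict_mem (hEm l),
        ae_restrict_of_ae hgae] with x hx hxl hgx
      have hAb : ‖g x‖ ≤ max K 0 := by
        rw [← hgx]
        exact le_trans (hx _ (le_trans hxl (by linarith))) (le_max_left _ _)
      calc ‖(inner ℝ (D x) (Z x) : ℝ)‖ ≤ ‖D x‖ * ‖Z x‖ := norm_inner_le_norm _ _
        _ ≤ (‖A0' x‖ + max K 0) * 1 := by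
            apply mul_le_mul _ (hZle x) (norm_nonneg _) (by positivity)
            rw [hDdef]
            exact le_trans (norm_sub_le _ _) (add_le_add le_rfl hAb)
        _ = ‖A0' x‖ + max K 0 := mul_one _
    have hge : 0 ≤ ∫ x in E l, (inner ℝ (D x) (Z x) : ℝ) ∂μ :=
      integral_nonneg fun x => hZnn x
    have hzero : ∫ x in E l, (inner ℝ (D x) (Z x) : ℝ) ∂μ = 0 := le_antisymm hle hge
    have hae0 : (fun x => (inner ℝ (D x) (Z x) : ℝ)) =ᵐ[μ.restrict (E l)] 0 :=
      (integral_eq_zero_iff_of_nonneg_ae (ae_of_all _ fun x => hZnn x) hInt).1 hzero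
    filter_upwards [hae0] with x hx
    simp only [Pi.zero_apply] at hx
    rw [hZdef] at hx
    simp only at hx
    rw [real_inner_smul_right, real_inner_self_eq_norm_sq] at hx
    have h1 : (0:ℝ) < (1 + ‖D x‖)⁻¹ := by positivity
    have h2 : ‖D x‖ ^ 2 = 0 := by
      rcases mul_eq_zero.1 hx with h | h
      · exact absurd h h1.ne'
      · exact h
    have h3 : ‖D x‖ = 0 := by
      have := pow_eq_zero_iff (n := 2) (by norm_num) |>.1 h2
      exact this
    exact norm_eq_zero.1 h3
  -- Step 6: combine over all l
  have hall : ∀ᵐ x ∂μ, ∀ l : ℕ, x ∈ E l → D x = 0 := by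
    rw [ae_all_iff]
    intro l
    rw [← ae_restrict_iff' (hEm l)]
    exact step5 l
  have hD0 : ∀ᵐ x ∂μ, D x = 0 := by
    filter_upwards [hall] with x hx
    obtain ⟨l, hl⟩ := exists_nat_ge ‖W' x‖
    exact hx l hl
  filter_upwards [hD0, hWW', hA0A0', hgae] with x h1 h2 h3 h4
  have h5 : A0' x = g x := by
    rw [hDdef] at h1
    simp only at h1
    exact sub_eq_zero.1 h1
  calc A0 x = A0' x := h3
    _ = g x := h5
    _ = A x (W' x) := h4.symm
    _ = A x (W x) := by rw [h2]
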